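/- Let (Q, ν_Q) be a nontrivial commutative valued ring, and let N, N′ be finite free valued modules over Q with a ν_N-orthogonal basis (n_i)_{i∈ι} and a ν_{N′}-orthogonal basis (n′_j)_{j∈ι′}, where ι and ι′ are finite nonempty index types. Let e_{ij} : N → N′ be the Q-linear map with e_{ij}(n_k) = δ_{ik}·n′_j. Then the family (e_{ij})_{(i,j)∈ι×ι′} is a ν_{N,N′}-orthogonal basis of Hom_Q(N, N′): for all coefficients q_{ij} ∈ Q, ν_{N,N′}(∑_{i,j} q_{ij}·e_{ij}) = min_{i,j} (ν_Q(q_{ij}) + ν_{N,N′}(e_{ij})). -/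

import Mathlib

open scoped BigOperators

/-- A valuation on a commutative ring, valued in `ℝ ∪ {∞}`
(modeled as `EReal` while avoiding the value `⊥ = −∞`). -/
structure IsRingValuation {Q : Type*} [CommRing Q] (ν : Q → EReal) : Prop where
  ne_bot : ∀ q, ν q ≠ ⊥
  top_iff : ∀ q, ν q = ⊤ ↔ q = 0
  min_le_add : ∀ q₁ q₂, min (ν q₁) (ν q₂) ≤ ν (q₁ + q₂)
  map_mul : ∀ q₁ q₂, ν (q₁ * q₂) = ν q₁ + ν q₂

/-- A valued module over a valued ring. -/
structure IsValuedModule {Q M : Type*} [CommRing Q] [AddCommGroup M] [Module Q M]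
    (νQ : Q → EReal) (ν : M → EReal) : Prop where
  ne_bot : ∀ m, ν m ≠ ⊥
  top_iff : ∀ m, ν m = ⊤ ↔ m = 0
  min_le_add : ∀ m₁ m₂, min (ν m₁) (ν m₂) ≤ ν (m₁ + m₂)
  map_smul : ∀ (q : Q) (m : M), ν (q • m) = νQ q + ν m

/-- The operator valuation of a `Q`-linear map between valued modules:
`ν_{N,N′}(Φ) = inf { ν_{N′}(Φ n) − ν_N(n) : n ≠ 0 }`, infimum in the extended reals. -/
noncomputable def opVal {Q N N' : Type*} [CommRing Q] [AddCommGroup N] [Module Q N]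
    [AddCommGroup N'] [Module Q N'] (νN : N → EReal) (νN' : N' → EReal)
    (Φ : N →ₗ[Q] N') : EReal :=
  ⨅ n : {n : N // n ≠ 0}, (νN' (Φ n.1) - νN n.1)

lemma aux_add_coe_sub_coe (x : EReal) (a b : ℝ) :
    x + (b : EReal) - (a : EReal) = x + (((b - a : ℝ)) : EReal) := by
  induction x with
  | bot => rw [EReal.bot_add, EReal.bot_sub, EReal.bot_add]
  | coe x =>
      rw [← EReal.coe_add, ← EReal.coe_sub, ← EReal.coe_add, EReal.coe_eq_coe_iff]
      ring
  | top =>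
      rw [EReal.top_add_coe, EReal.top_sub_coe, EReal.top_add_coe]

lemma aux_val_sum {Q : Type*} [CommRing Q] {νQ : Q → EReal} (hQ : IsRingValuation νQ)
    {ι : Type*} (s : Finset ι) (f : ι → Q) (m : EReal)
    (h : ∀ i ∈ s, m ≤ νQ (f i)) : m ≤ νQ (∑ i ∈ s, f i) := by
  classical
  induction s using Finset.induction with
  | empty => simp [(hQ.top_iff 0).2 rfl]
  | insert a s' hni ih =>
      rw [Finset.sum_insert hni]
      refine le_trans ?_ (hQ.min_le_add _ _)
      exact le_min (h a (Finset.mem_insert_self a s'))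
        (ih fun i hi => h i (Finset.mem_insert_of_mem hi))

lemma aux_val_one {Q : Type*} [CommRing Q] [Nontrivial Q] {νQ : Q → EReal}
    (hQ : IsRingValuation νQ) : νQ 1 = 0 := by
  have h := hQ.map_mul 1 1
  rw [one_mul] at h
  have hnt : νQ 1 ≠ ⊤ := fun ht => one_ne_zero ((hQ.top_iff 1).1 ht)
  obtain ⟨r, hr⟩ : ∃ r : ℝ, νQ 1 = (r : EReal) :=
    ⟨(νQ 1).toReal, (EReal.coe_toReal hnt (hQ.ne_bot 1)).symm⟩
  rw [hr, ← EReal.coe_add, EReal.coe_eq_coe_iff] at h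
  have : r = 0 := by linarith
  rw [hr, this, EReal.coe_zero]

/-- Key computation: the operator valuation of a linear map given by a matrix `c`
with respect to orthogonal bases. -/
lemma aux_opVal_formula {Q N N' : Type*} [CommRing Q] [Nontrivial Q]
    [AddCommGroup N] [Module Q N] [AddCommGroup N'] [Module Q N']
    {ι ι' : Type*} [Fintype ι] [Nonempty ι]
    [Fintype ι'] [Nonempty ι']
    (νQ : Q → EReal) (νN : N → EReal) (νN' : N' → EReal)
    (hQ : IsRingValuation νQ)
    (hN : IsValuedModule νQ νN) (hN' : IsValuedModule νQ νN')
    (bN : Module.Basis ι Q N) (bN' : Module.Basis ι' Q N')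
    (horthN : ∀ q : ι → Q, νN (∑ i, q i • bN i) = ⨅ i, (νQ (q i) + νN (bN i)))
    (horthN' : ∀ q : ι' → Q, νN' (∑ j, q j • bN' j) = ⨅ j, (νQ (q j) + νN' (bN' j)))
    (c : ι → ι' → Q) (Φ : N →ₗ[Q] N')
    (hΦ : ∀ k, Φ (bN k) = ∑ j, c k j • bN' j) :
    opVal νN νN' Φ = ⨅ p : ι × ι', (νQ (c p.1 p.2) + νN' (bN' p.2) - νN (bN p.1)) := by
  classical
  rw [opVal]
  -- real values of the basis vectors
  set a : ι → ℝ := fun i => (νN (bN i)).toReal with ha_def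
  have ha : ∀ i, νN (bN i) = (a i : EReal) := by
    intro i
    refine (EReal.coe_toReal ?_ (hN.ne_bot _)).symm
    exact fun ht => bN.ne_zero i ((hN.top_iff _).1 ht)
  set b : ι' → ℝ := fun j => (νN' (bN' j)).toReal with hb_def
  have hb : ∀ j, νN' (bN' j) = (b j : EReal) := by
    intro j
    refine (EReal.coe_toReal ?_ (hN'.ne_bot _)).symm
    exact fun ht => bN'.ne_zero j ((hN'.top_iff _).1 ht)
  have hΦn : ∀ n : N, Φ n = ∑ j, (∑ i, bN.repr n i * c i j) • bN' j := by
    intro n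
    conv_lhs => rw [← bN.sum_repr n]
    rw [map_sum]
    simp_rw [map_smul, hΦ, Finset.smul_sum, smul_smul, Finset.sum_smul]
    exact Finset.sum_comm
  have hνNn : ∀ n : N, νN n = ⨅ i, (νQ (bN.repr n i) + νN (bN i)) := by
    intro n
    have := horthN fun i => bN.repr n i
    rwa [bN.sum_repr] at this
  refine le_antisymm ?_ ?_
  · refine le_iInf ?_
    rintro ⟨i, j⟩
    have h1 : (⨅ n : {n : N // n ≠ 0}, (νN' (Φ n.1) - νN n.1)) ≤ νN' (Φ (bN i)) - νN (bN i) :=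
      iInf_le (fun n : {n : N // n ≠ 0} => νN' (Φ n.1) - νN n.1) ⟨bN i, bN.ne_zero i⟩
    rw [hΦ i, horthN'] at h1
    exact h1.trans (EReal.sub_le_sub (iInf_le _ j) le_rfl)
  · refine le_iInf ?_
    rintro ⟨n, hn⟩
    have hnt : νN n ≠ ⊤ := fun ht => hn ((hN.top_iff n).1 ht)
    rw [EReal.le_sub_iff_add_le (Or.inl (hN.ne_bot n)) (Or.inl hnt)]
    rw [hΦn n, horthN']
    refine le_iInf ?_
    intro j
    rw [hb j]
    rw [← EReal.sub_le_iff_le_add (Or.inl (EReal.coe_ne_bot _)) (Or.inl (EReal.coe_ne_top _))]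
    rw [show (∑ i, bN.repr n i * c i j) = ∑ i ∈ Finset.univ, bN.repr n i * c i j from rfl]
    refine aux_val_sum hQ _ _ _ ?_
    intro i _
    rw [hQ.map_mul]
    refine EReal.sub_le_of_le_add ?_
    have h2 : (⨅ p : ι × ι', (νQ (c p.1 p.2) + νN' (bN' p.2) - νN (bN p.1)))
        ≤ νQ (c i j) + (b j : EReal) - (a i : EReal) := by
      have := iInf_le (fun p : ι × ι' => νQ (c p.1 p.2) + νN' (bN' p.2) - νN (bN p.1)) (i, j)
      rwa [ha i, hb j] at this
    have h3 : νN n ≤ νQ (bN.repr n i) + (a i : EReal) := by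
      rw [hνNn n]
      have := iInf_le (fun i => νQ (bN.repr n i) + νN (bN i)) i
      rwa [ha i] at this
    refine (add_le_add h2 h3).trans ?_
    rw [aux_add_coe_sub_coe, add_add_add_comm, ← EReal.coe_add]
    rw [show b j - a i + a i = b j from by ring]
    rw [add_comm (νQ (c i j)) (νQ (bN.repr n i))]

/-- For `ν`-orthogonal bases `(n_i)` of `N` and `(n′_j)` of `N′`, the
elementary maps `e_{ij}` (with `e_{ij}(n_k) = δ_{ik}·n′_j`) form a `ν_{N,N′}`-orthogonal
basis of `Hom_Q(N, N′)`:
`ν_{N,N′}(∑_{i,j} q_{ij}·e_{ij}) = min_{i,j} (ν_Q(q_{ij}) + ν_{N,N′}(e_{ij}))`. -/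
theorem elementary_orthogonal_basis {Q N N' : Type*} [CommRing Q] [Nontrivial Q]
    [AddCommGroup N] [Module Q N] [AddCommGroup N'] [Module Q N']
    {ι ι' : Type*} [Fintype ι] [Nonempty ι] [DecidableEq ι]
    [Fintype ι'] [Nonempty ι']
    (νQ : Q → EReal) (νN : N → EReal) (νN' : N' → EReal)
    (hQ : IsRingValuation νQ)
    (hN : IsValuedModule νQ νN) (hN' : IsValuedModule νQ νN')
    (bN : Module.Basis ι Q N) (bN' : Module.Basis ι' Q N')
    (horthN : ∀ q : ι → Q, νN (∑ i, q i • bN i) = ⨅ i, (νQ (q i) + νN (bN i)))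
    (horthN' : ∀ q : ι' → Q, νN' (∑ j, q j • bN' j) = ⨅ j, (νQ (q j) + νN' (bN' j)))
    (e : ι → ι' → (N →ₗ[Q] N'))
    (he : ∀ i j k, e i j (bN k) = if k = i then bN' j else 0) :
    ∀ q : ι → ι' → Q,
      opVal νN νN' (∑ i, ∑ j, q i j • e i j) =
        ⨅ p : ι × ι', (νQ (q p.1 p.2) + opVal νN νN' (e p.1 p.2)) := by
  classical
  intro q
  have ha : ∀ i, νN (bN i) = (((νN (bN i)).toReal : ℝ) : EReal) := by
    intro i
    refine (EReal.coe_toReal ?_ (hN.ne_bot _)).symm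
    exact fun ht => bN.ne_zero i ((hN.top_iff _).1 ht)
  have hb : ∀ j, νN' (bN' j) = (((νN' (bN' j)).toReal : ℝ) : EReal) := by
    intro j
    refine (EReal.coe_toReal ?_ (hN'.ne_bot _)).symm
    exact fun ht => bN'.ne_zero j ((hN'.top_iff _).1 ht)
  -- operator valuation of the elementary maps
  have he' : ∀ i j, opVal νN νN' (e i j) = νN' (bN' j) - νN (bN i) := by
    intro i j
    have hc : ∀ k, e i j (bN k) =
        ∑ j', (if k = i ∧ j' = j then (1 : Q) else 0) • bN' j' := by
      intro k
      rw [he]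
      by_cases hk : k = i <;> simp [hk]
    rw [aux_opVal_formula νQ νN νN' hQ hN hN' bN bN' horthN horthN' _ _ hc]
    refine le_antisymm ?_ ?_
    · have h1 := iInf_le (fun p : ι × ι' =>
        (νQ (if p.1 = i ∧ p.2 = j then (1 : Q) else 0) + νN' (bN' p.2) - νN (bN p.1))) (i, j)
      simpa [aux_val_one hQ] using h1
    · refine le_iInf ?_
      rintro ⟨k, j'⟩
      by_cases hkj : k = i ∧ j' = j
      · obtain ⟨rfl, rfl⟩ := hkj
        simp [aux_val_one hQ]
      · simp only [hkj, if_false]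
        rw [(hQ.top_iff 0).2 rfl, hb j', ha k, EReal.top_add_coe, EReal.top_sub_coe]
        exact le_top
  -- the map Φ = ∑ q i j • e i j sends bN k to ∑ j, q k j • bN' j
  have hΦ : ∀ k, (∑ i, ∑ j, q i j • e i j) (bN k) = ∑ j, q k j • bN' j := by
    intro k
    simp only [LinearMap.sum_apply, LinearMap.smul_apply, he, smul_ite, smul_zero]
    rw [Finset.sum_comm]
    simp
  rw [aux_opVal_formula νQ νN νN' hQ hN hN' bN bN' horthN horthN' _ _ hΦ]
  refine iInf_congr ?_
  rintro ⟨i, j⟩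
  rw [he' i j, ha i, hb j, aux_add_coe_sub_coe, EReal.coe_sub]
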